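/- Every finite interval order having a representation by closed real intervals each of length 0 or length 1 has order dimension at most 3. -/
import Mathlib


/-- `L` is a linear extension of the partial order on `α`. -/
def IsLinearExtension {α : Type*} [PartialOrder α] (L : α → α → Prop) : Prop :=
  IsLinearOrder α L ∧ ∀ x y : α, x ≤ y → L x y

/-- The order dimension of `α` is at most `t`. -/
def DimLE (α : Type*) [PartialOrder α] (t : ℕ) : Prop :=
  ∃ L : Fin t → α → α → Prop, (∀ i, IsLinearExtension (L i)) ∧
    ∀ x y : α, x ≤ y ↔ ∀ i, L i x y

namespace Stmt7Aux

open scoped Classical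

variable {α : Type*} [Fintype α]

/-- The greedy band index of an element: length of the longest chain of left endpoints
each more than 1 apart, ending at `x`. -/
noncomputable def band (l : α → ℝ) (x : α) : ℕ :=
  (Finset.univ.filter (fun z => l z < l x)).attach.sup
    (fun y => if l y.1 + 1 < l x then band l y.1 + 1 else 0)
termination_by (Finset.univ.filter (fun z => l z < l x)).card
decreasing_by
  · apply Finset.card_lt_card
    have hy : l y.1 < l x := (Finset.mem_filter.1 y.2).2
    constructor
    · intro z hz
      simp only [Finset.mem_filter, Finset.mem_univ, true_and] at hz ⊢
      linarith
    · intro hsub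
      have := hsub (Finset.mem_filter.2 ⟨Finset.mem_univ y.1, hy⟩)
      simp only [Finset.mem_filter, Finset.mem_univ, true_and] at this
      exact lt_irrefl _ this

theorem band_def (l : α → ℝ) (x : α) : band l x =
    (Finset.univ.filter (fun z => l z < l x)).attach.sup
      (fun y => if l y.1 + 1 < l x then band l y.1 + 1 else 0) := by
  rw [band]

theorem gap_band {l : α → ℝ} {a b : α} (h : l a + 1 < l b) :
    band l a + 1 ≤ band l b := by
  conv_rhs => rw [band_def]
  have ha : a ∈ Finset.univ.filter (fun z => l z < l b) :=
    Finset.mem_filter.2 ⟨Finset.mem_univ a, by linarith⟩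
  have := Finset.le_sup (f := fun y : {z // z ∈ Finset.univ.filter (fun z => l z < l b)} =>
    if l y.1 + 1 < l b then band l y.1 + 1 else 0)
    (Finset.mem_attach _ ⟨a, ha⟩)
  simpa [if_pos h] using this

theorem band_mono {l : α → ℝ} {a b : α} (h : l a ≤ l b) :
    band l a ≤ band l b := by
  conv_lhs => rw [band_def]
  apply Finset.sup_le
  intro y _
  by_cases hy : l y.1 + 1 < l a
  · rw [if_pos hy]
    exact gap_band (by linarith)
  · rw [if_neg hy]; exact Nat.zero_le _

theorem band_le_succ {l : α → ℝ} {a b : α} (h : l b ≤ l a + 1) :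
    band l b ≤ band l a + 1 := by
  conv_lhs => rw [band_def]
  apply Finset.sup_le
  intro y _
  by_cases hy : l y.1 + 1 < l b
  · rw [if_pos hy]
    have : l y.1 ≤ l a := by linarith
    exact Nat.succ_le_succ (band_mono this)
  · rw [if_neg hy]; exact Nat.zero_le _

variable (l r : α → ℝ) (ι : α → ℕ) (N : ℕ)

/-- Key for the first linear extension. -/
noncomputable def key0 (x : α) : ℕ ×ₗ ℕ ×ₗ ℝ ×ₗ ℕ :=
  toLex (band l x, toLex ((if r x = l x then 0 else 1),
    toLex ((if r x = l x then l x else -l x), N - ι x)))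

/-- Key for the second linear extension. -/
noncomputable def key1 (x : α) : ℕ ×ₗ ℝ ×ₗ ℕ ×ₗ ℕ :=
  toLex (band l x / 2,
    toLex ((if band l x % 2 = 0 ∧ r x = l x + 1 then l x + 1 else l x),
      toLex ((if band l x % 2 = 1 then (if r x = l x + 1 then 0 else 1) else 2), ι x)))

/-- Key for the third linear extension. -/
noncomputable def key2 (x : α) : ℕ ×ₗ ℝ ×ₗ ℕ ×ₗ ℕ :=
  toLex ((band l x + 1) / 2,
    toLex ((if band l x % 2 = 1 ∧ r x = l x + 1 then l x + 1 else l x),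
      toLex ((if band l x % 2 = 0 then (if r x = l x + 1 then 0 else 1) else 2), ι x)))

theorem lex_lt_a {a1 b1 a2 b2 : ℕ} {a3 b3 : ℝ} {a4 b4 : ℕ}
    (h : a1 < b1 ∨ (a1 = b1 ∧ (a2 < b2 ∨ (a2 = b2 ∧ (a3 < b3 ∨ (a3 = b3 ∧ a4 < b4)))))) :
    toLex (a1, toLex (a2, toLex (a3, a4))) < toLex (b1, toLex (b2, toLex (b3, b4))) := by
  rw [Prod.Lex.lt_iff]
  rcases h with h | ⟨rfl, h⟩
  · exact Or.inl h
  · refine Or.inr ⟨rfl, ?_⟩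
    rw [Prod.Lex.lt_iff]
    rcases h with h | ⟨rfl, h⟩
    · exact Or.inl h
    · refine Or.inr ⟨rfl, ?_⟩
      rw [Prod.Lex.lt_iff]
      rcases h with h | ⟨rfl, h⟩
      · exact Or.inl h
      · exact Or.inr ⟨rfl, h⟩

theorem lex_lt_b {a1 b1 : ℕ} {a2 b2 : ℝ} {a3 b3 a4 b4 : ℕ}
    (h : a1 < b1 ∨ (a1 = b1 ∧ (a2 < b2 ∨ (a2 = b2 ∧ (a3 < b3 ∨ (a3 = b3 ∧ a4 < b4)))))) :
    toLex (a1, toLex (a2, toLex (a3, a4))) < toLex (b1, toLex (b2, toLex (b3, b4))) := by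
  rw [Prod.Lex.lt_iff]
  rcases h with h | ⟨rfl, h⟩
  · exact Or.inl h
  · refine Or.inr ⟨rfl, ?_⟩
    rw [Prod.Lex.lt_iff]
    rcases h with h | ⟨rfl, h⟩
    · exact Or.inl h
    · refine Or.inr ⟨rfl, ?_⟩
      rw [Prod.Lex.lt_iff]
      rcases h with h | ⟨rfl, h⟩
      · exact Or.inl h
      · exact Or.inr ⟨rfl, h⟩

theorem lex_eq_a {a1 b1 a2 b2 : ℕ} {a3 b3 : ℝ} {a4 b4 : ℕ}
    (h : toLex (a1, toLex (a2, toLex (a3, a4))) = toLex (b1, toLex (b2, toLex (b3, b4)))) :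
    a4 = b4 := by
  have h1 := toLex.injective h
  have h2 := toLex.injective (congrArg Prod.snd h1)
  have h3 := toLex.injective (congrArg Prod.snd h2)
  exact congrArg Prod.snd h3

theorem lex_eq_b {a1 b1 : ℕ} {a2 b2 : ℝ} {a3 b3 a4 b4 : ℕ}
    (h : toLex (a1, toLex (a2, toLex (a3, a4))) = toLex (b1, toLex (b2, toLex (b3, b4)))) :
    a4 = b4 := by
  have h1 := toLex.injective h
  have h2 := toLex.injective (congrArg Prod.snd h1)
  have h3 := toLex.injective (congrArg Prod.snd h2)
  exact congrArg Prod.snd h3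


section MainLemmas

theorem ext0 (hur : ∀ x, r x = l x ∨ r x = l x + 1) {x y : α} (hxy : r x < l y) :
    key0 l r ι N x < key0 l r ι N y := by
  have hlx : l x ≤ r x := by rcases hur x with h | h <;> linarith
  have hb : band l x ≤ band l y := band_mono (by linarith)
  simp only [key0]
  apply lex_lt_a
  rcases lt_or_eq_of_le hb with hblt | hbeq
  · exact Or.inl hblt
  · refine Or.inr ⟨hbeq, ?_⟩
    have hng : l y ≤ l x + 1 := by
      by_contra hc
      push_neg at hc
      have := gap_band (l := l) (a := x) (b := y) hc
      omega
    have hx : r x = l x := by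
      rcases hur x with h | h
      · exact h
      · exfalso; linarith
    rcases hur y with hy | hy
    · refine Or.inr ⟨?_, Or.inl ?_⟩
      · rw [if_pos hx, if_pos hy]
      · rw [if_pos hx, if_pos hy]; linarith
    · have hy' : ¬ r y = l y := by rw [hy]; intro hh; linarith
      left
      rw [if_pos hx, if_neg hy']
      norm_num

theorem ext1 (hur : ∀ x, r x = l x ∨ r x = l x + 1) {x y : α} (hxy : r x < l y) :
    key1 l r ι x < key1 l r ι y := by
  have hlx : l x ≤ r x := by rcases hur x with h | h <;> linarith
  have hb : band l x ≤ band l y := band_mono (by linarith)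
  simp only [key1]
  apply lex_lt_b
  have hdiv : band l x / 2 ≤ band l y / 2 := Nat.div_le_div_right hb
  rcases lt_or_eq_of_le hdiv with hblt | hbeq
  · exact Or.inl hblt
  · refine Or.inr ⟨hbeq, ?_⟩
    have hcase : band l y = band l x ∨ (band l y = band l x + 1 ∧ band l x % 2 = 0) := by
      omega
    left
    rcases hcase with hsame | ⟨hcross, hev⟩
    · have hng : l y ≤ l x + 1 := by
        by_contra hc
        push_neg at hc
        have := gap_band (l := l) (a := x) (b := y) hc
        omega
      have hx : r x = l x := by
        rcases hur x with h | h
        · exact h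
        · exfalso; linarith
      have hx' : ¬ (band l x % 2 = 0 ∧ r x = l x + 1) := by
        rintro ⟨-, hh⟩; rw [hx] at hh; linarith
      rw [if_neg hx']
      by_cases hcy : band l y % 2 = 0 ∧ r y = l y + 1
      · rw [if_pos hcy]; linarith
      · rw [if_neg hcy]; linarith
    · have hvx : (if band l x % 2 = 0 ∧ r x = l x + 1 then l x + 1 else l x) = r x := by
        rcases hur x with h | h
        · rw [if_neg (by rintro ⟨-, hh⟩; rw [h] at hh; linarith)]
          exact h.symm
        · rw [if_pos ⟨hev, h⟩]; exact h.symm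
      have hvy : (if band l y % 2 = 0 ∧ r y = l y + 1 then l y + 1 else l y) = l y := by
        rw [if_neg (by rintro ⟨hh, -⟩; omega)]
      rw [hvx, hvy]; exact hxy

theorem ext2 (hur : ∀ x, r x = l x ∨ r x = l x + 1) {x y : α} (hxy : r x < l y) :
    key2 l r ι x < key2 l r ι y := by
  have hlx : l x ≤ r x := by rcases hur x with h | h <;> linarith
  have hb : band l x ≤ band l y := band_mono (by linarith)
  simp only [key2]
  apply lex_lt_b
  have hdiv : (band l x + 1) / 2 ≤ (band l y + 1) / 2 := by omega
  rcases lt_or_eq_of_le hdiv with hblt | hbeq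
  · exact Or.inl hblt
  · refine Or.inr ⟨hbeq, ?_⟩
    have hcase : band l y = band l x ∨ (band l y = band l x + 1 ∧ band l x % 2 = 1) := by
      omega
    left
    rcases hcase with hsame | ⟨hcross, hod⟩
    · have hng : l y ≤ l x + 1 := by
        by_contra hc
        push_neg at hc
        have := gap_band (l := l) (a := x) (b := y) hc
        omega
      have hx : r x = l x := by
        rcases hur x with h | h
        · exact h
        · exfalso; linarith
      have hx' : ¬ (band l x % 2 = 1 ∧ r x = l x + 1) := by
        rintro ⟨-, hh⟩; rw [hx] at hh; linarith
      rw [if_neg hx']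
      by_cases hcy : band l y % 2 = 1 ∧ r y = l y + 1
      · rw [if_pos hcy]; linarith
      · rw [if_neg hcy]; linarith
    · have hvx : (if band l x % 2 = 1 ∧ r x = l x + 1 then l x + 1 else l x) = r x := by
        rcases hur x with h | h
        · rw [if_neg (by rintro ⟨-, hh⟩; rw [h] at hh; linarith)]
          exact h.symm
        · rw [if_pos ⟨hod, h⟩]; exact h.symm
      have hvy : (if band l y % 2 = 1 ∧ r y = l y + 1 then l y + 1 else l y) = l y := by
        rw [if_neg (by rintro ⟨hh, -⟩; omega)]
      rw [hvx, hvy]; exact hxy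

theorem rev (hur : ∀ x, r x = l x ∨ r x = l x + 1) (hιinj : Function.Injective ι)
    (hιN : ∀ x, ι x < N) {x y : α} (h1 : l y ≤ r x) (h2 : l x ≤ r y) (hne : x ≠ y) :
    key0 l r ι N y < key0 l r ι N x ∨ key1 l r ι y < key1 l r ι x ∨
      key2 l r ι y < key2 l r ι x := by
  have hlx : l x ≤ r x := by rcases hur x with h | h <;> linarith
  have hly : l y ≤ r y := by rcases hur y with h | h <;> linarith
  have hrx1 : r x ≤ l x + 1 := by rcases hur x with h | h <;> linarith
  have hry1 : r y ≤ l y + 1 := by rcases hur y with h | h <;> linarith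
  have hby : band l y ≤ band l x + 1 := band_le_succ (by linarith)
  have hbx : band l x ≤ band l y + 1 := band_le_succ (by linarith)
  rcases Nat.lt_trichotomy (band l x) (band l y) with hbb | hbb | hbb
  · -- x is in the lower band, y in the upper band: reverse in the band-parity class
    have hxy1 : band l y = band l x + 1 := by omega
    have hlxy : l x < l y := by
      by_contra hc
      push_neg at hc
      have := band_mono (l := l) hc
      omega
    have hux : r x = l x + 1 := by
      rcases hur x with hh | hh
      · exfalso; rw [hh] at h1; linarith
      · exact hh
    rcases Nat.mod_two_eq_zero_or_one (band l x) with hev | hod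
    · right; left
      simp only [key1]
      apply lex_lt_b
      refine Or.inr ⟨by omega, ?_⟩
      have hvy : (if band l y % 2 = 0 ∧ r y = l y + 1 then l y + 1 else l y) = l y := by
        rw [if_neg (by rintro ⟨hh, -⟩; omega)]
      have hvx : (if band l x % 2 = 0 ∧ r x = l x + 1 then l x + 1 else l x) = l x + 1 :=
        if_pos ⟨hev, hux⟩
      rw [hvy, hvx]
      rcases lt_or_eq_of_le (by linarith : l y ≤ l x + 1) with hvlt | hveq
      · exact Or.inl hvlt
      · refine Or.inr ⟨hveq, Or.inl ?_⟩
        have hpx : (if band l x % 2 = 1 then (if r x = l x + 1 then 0 else 1) else 2) = 2 :=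
          if_neg (by omega)
        rw [hpx, if_pos (by omega : band l y % 2 = 1)]
        split_ifs <;> norm_num
    · right; right
      simp only [key2]
      apply lex_lt_b
      refine Or.inr ⟨by omega, ?_⟩
      have hvy : (if band l y % 2 = 1 ∧ r y = l y + 1 then l y + 1 else l y) = l y := by
        rw [if_neg (by rintro ⟨hh, -⟩; omega)]
      have hvx : (if band l x % 2 = 1 ∧ r x = l x + 1 then l x + 1 else l x) = l x + 1 :=
        if_pos ⟨hod, hux⟩
      rw [hvy, hvx]
      rcases lt_or_eq_of_le (by linarith : l y ≤ l x + 1) with hvlt | hveq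
      · exact Or.inl hvlt
      · refine Or.inr ⟨hveq, Or.inl ?_⟩
        have hpx : (if band l x % 2 = 0 then (if r x = l x + 1 then 0 else 1) else 2) = 2 :=
          if_neg (by omega)
        rw [hpx, if_pos (by omega : band l y % 2 = 0)]
        split_ifs <;> norm_num
  · -- same band
    have hsb : band l y = band l x := hbb.symm
    rcases hur x with hx | hx <;> rcases hur y with hy | hy
    · -- both are points: they must coincide, so compare tiebreakers
      have hll : l x = l y := by rw [hx] at h1; rw [hy] at h2; linarith
      have hι : ι x ≠ ι y := fun hh => hne (hιinj hh)
      rcases Nat.lt_or_ge (ι x) (ι y) with hih | hih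
      · left
        simp only [key0]
        apply lex_lt_a
        refine Or.inr ⟨hsb, Or.inr ⟨by rw [if_pos hy, if_pos hx],
          Or.inr ⟨by rw [if_pos hy, if_pos hx, hll], ?_⟩⟩⟩
        have := hιN y
        omega
      · have hih' : ι y < ι x := by omega
        rcases Nat.mod_two_eq_zero_or_one (band l x) with hev | hod
        · right; right
          simp only [key2]
          apply lex_lt_b
          have hvy : (if band l y % 2 = 1 ∧ r y = l y + 1 then l y + 1 else l y) = l y := by
            rw [if_neg (by rintro ⟨hh, -⟩; omega)]
          have hvx : (if band l x % 2 = 1 ∧ r x = l x + 1 then l x + 1 else l x) = l x := by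
            rw [if_neg (by rintro ⟨hh, -⟩; omega)]
          have hpy : (if band l y % 2 = 0 then (if r y = l y + 1 then 0 else 1) else 2) = 1 := by
            rw [if_pos (by omega), if_neg (by rw [hy]; intro hh; linarith)]
          have hpx : (if band l x % 2 = 0 then (if r x = l x + 1 then 0 else 1) else 2) = 1 := by
            rw [if_pos hev, if_neg (by rw [hx]; intro hh; linarith)]
          exact Or.inr ⟨by omega, Or.inr ⟨by rw [hvy, hvx, hll],
            Or.inr ⟨by rw [hpy, hpx], hih'⟩⟩⟩
        · right; left
          simp only [key1]
          apply lex_lt_b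
          have hvy : (if band l y % 2 = 0 ∧ r y = l y + 1 then l y + 1 else l y) = l y := by
            rw [if_neg (by rintro ⟨hh, -⟩; omega)]
          have hvx : (if band l x % 2 = 0 ∧ r x = l x + 1 then l x + 1 else l x) = l x := by
            rw [if_neg (by rintro ⟨hh, -⟩; omega)]
          have hpy : (if band l y % 2 = 1 then (if r y = l y + 1 then 0 else 1) else 2) = 1 := by
            rw [if_pos (by omega), if_neg (by rw [hy]; intro hh; linarith)]
          have hpx : (if band l x % 2 = 1 then (if r x = l x + 1 then 0 else 1) else 2) = 1 := by
            rw [if_pos hod, if_neg (by rw [hx]; intro hh; linarith)]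
          exact Or.inr ⟨by omega, Or.inr ⟨by rw [hvy, hvx, hll],
            Or.inr ⟨by rw [hpy, hpx], hih'⟩⟩⟩
    · -- x is a point, y is a unit containing it: reverse in the band-parity class
      have hlyx : l y ≤ l x := by rw [hx] at h1; exact h1
      rcases Nat.mod_two_eq_zero_or_one (band l x) with hev | hod
      · right; right
        simp only [key2]
        apply lex_lt_b
        have hvy : (if band l y % 2 = 1 ∧ r y = l y + 1 then l y + 1 else l y) = l y := by
          rw [if_neg (by rintro ⟨hh, -⟩; omega)]
        have hvx : (if band l x % 2 = 1 ∧ r x = l x + 1 then l x + 1 else l x) = l x := by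
          rw [if_neg (by rintro ⟨hh, -⟩; omega)]
        refine Or.inr ⟨by omega, ?_⟩
        rw [hvy, hvx]
        rcases lt_or_eq_of_le hlyx with hvlt | hveq
        · exact Or.inl hvlt
        · refine Or.inr ⟨hveq, Or.inl ?_⟩
          have hpy : (if band l y % 2 = 0 then (if r y = l y + 1 then 0 else 1) else 2) = 0 := by
            rw [if_pos (by omega), if_pos hy]
          have hpx : (if band l x % 2 = 0 then (if r x = l x + 1 then 0 else 1) else 2) = 1 := by
            rw [if_pos hev, if_neg (by rw [hx]; intro hh; linarith)]
          rw [hpy, hpx]; norm_num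
      · right; left
        simp only [key1]
        apply lex_lt_b
        have hvy : (if band l y % 2 = 0 ∧ r y = l y + 1 then l y + 1 else l y) = l y := by
          rw [if_neg (by rintro ⟨hh, -⟩; omega)]
        have hvx : (if band l x % 2 = 0 ∧ r x = l x + 1 then l x + 1 else l x) = l x := by
          rw [if_neg (by rintro ⟨hh, -⟩; omega)]
        refine Or.inr ⟨by omega, ?_⟩
        rw [hvy, hvx]
        rcases lt_or_eq_of_le hlyx with hvlt | hveq
        · exact Or.inl hvlt
        · refine Or.inr ⟨hveq, Or.inl ?_⟩
          have hpy : (if band l y % 2 = 1 then (if r y = l y + 1 then 0 else 1) else 2) = 0 := by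
            rw [if_pos (by omega), if_pos hy]
          have hpx : (if band l x % 2 = 1 then (if r x = l x + 1 then 0 else 1) else 2) = 1 := by
            rw [if_pos hod, if_neg (by rw [hx]; intro hh; linarith)]
          rw [hpy, hpx]; norm_num
    · -- x is a unit, y is a point: reverse in the class where points precede units
      left
      simp only [key0]
      apply lex_lt_a
      refine Or.inr ⟨hsb, Or.inl ?_⟩
      rw [if_pos hy, if_neg (by rw [hx]; intro hh; linarith)]
      norm_num
    · -- both are units
      rcases lt_trichotomy (l x) (l y) with hc | hc | hc
      · -- l x < l y : reverse in class 0, where units are sorted by decreasing l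
        left
        simp only [key0]
        apply lex_lt_a
        have hphx : (if r x = l x then 0 else 1) = 1 :=
          if_neg (by rw [hx]; intro hh; linarith)
        have hphy : (if r y = l y then 0 else 1) = 1 :=
          if_neg (by rw [hy]; intro hh; linarith)
        refine Or.inr ⟨hsb, Or.inr ⟨by rw [hphy, hphx], Or.inl ?_⟩⟩
        rw [if_neg (by rw [hy]; intro hh; linarith),
          if_neg (by rw [hx]; intro hh; linarith)]
        linarith
      · -- identical intervals: compare tiebreakers
        have hι : ι x ≠ ι y := fun hh => hne (hιinj hh)
        rcases Nat.lt_or_ge (ι x) (ι y) with hih | hih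
        · left
          simp only [key0]
          apply lex_lt_a
          have hphx : (if r x = l x then 0 else 1) = 1 :=
            if_neg (by rw [hx]; intro hh; linarith)
          have hphy : (if r y = l y then 0 else 1) = 1 :=
            if_neg (by rw [hy]; intro hh; linarith)
          refine Or.inr ⟨hsb, Or.inr ⟨by rw [hphy, hphx], Or.inr ⟨?_, ?_⟩⟩⟩
          · rw [if_neg (by rw [hy]; intro hh; linarith),
              if_neg (by rw [hx]; intro hh; linarith), hc]
          · have := hιN y
            omega
        · have hih' : ι y < ι x := by omega
          rcases Nat.mod_two_eq_zero_or_one (band l x) with hev | hod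
          · right; right
            simp only [key2]
            apply lex_lt_b
            have hvy : (if band l y % 2 = 1 ∧ r y = l y + 1 then l y + 1 else l y) = l y := by
              rw [if_neg (by rintro ⟨hh, -⟩; omega)]
            have hvx : (if band l x % 2 = 1 ∧ r x = l x + 1 then l x + 1 else l x) = l x := by
              rw [if_neg (by rintro ⟨hh, -⟩; omega)]
            have hpy : (if band l y % 2 = 0 then (if r y = l y + 1 then 0 else 1) else 2) = 0 := by
              rw [if_pos (by omega), if_pos hy]
            have hpx : (if band l x % 2 = 0 then (if r x = l x + 1 then 0 else 1) else 2) = 0 := by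
              rw [if_pos hev, if_pos hx]
            exact Or.inr ⟨by omega, Or.inr ⟨by rw [hvy, hvx, hc],
              Or.inr ⟨by rw [hpy, hpx], hih'⟩⟩⟩
          · right; left
            simp only [key1]
            apply lex_lt_b
            have hvy : (if band l y % 2 = 0 ∧ r y = l y + 1 then l y + 1 else l y) = l y := by
              rw [if_neg (by rintro ⟨hh, -⟩; omega)]
            have hvx : (if band l x % 2 = 0 ∧ r x = l x + 1 then l x + 1 else l x) = l x := by
              rw [if_neg (by rintro ⟨hh, -⟩; omega)]
            have hpy : (if band l y % 2 = 1 then (if r y = l y + 1 then 0 else 1) else 2) = 0 := by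
              rw [if_pos (by omega), if_pos hy]
            have hpx : (if band l x % 2 = 1 then (if r x = l x + 1 then 0 else 1) else 2) = 0 := by
              rw [if_pos hod, if_pos hx]
            exact Or.inr ⟨by omega, Or.inr ⟨by rw [hvy, hvx, hc],
              Or.inr ⟨by rw [hpy, hpx], hih'⟩⟩⟩
      · -- l y < l x : reverse in the band-parity class, where units are sorted by increasing l
        rcases Nat.mod_two_eq_zero_or_one (band l x) with hev | hod
        · right; right
          simp only [key2]
          apply lex_lt_b
          have hvy : (if band l y % 2 = 1 ∧ r y = l y + 1 then l y + 1 else l y) = l y := by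
            rw [if_neg (by rintro ⟨hh, -⟩; omega)]
          have hvx : (if band l x % 2 = 1 ∧ r x = l x + 1 then l x + 1 else l x) = l x := by
            rw [if_neg (by rintro ⟨hh, -⟩; omega)]
          refine Or.inr ⟨by omega, Or.inl ?_⟩
          rw [hvy, hvx]; exact hc
        · right; left
          simp only [key1]
          apply lex_lt_b
          have hvy : (if band l y % 2 = 0 ∧ r y = l y + 1 then l y + 1 else l y) = l y := by
            rw [if_neg (by rintro ⟨hh, -⟩; omega)]
          have hvx : (if band l x % 2 = 0 ∧ r x = l x + 1 then l x + 1 else l x) = l x := by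
            rw [if_neg (by rintro ⟨hh, -⟩; omega)]
          refine Or.inr ⟨by omega, Or.inl ?_⟩
          rw [hvy, hvx]; exact hc
  · -- y is in the lower band, x in the upper band: reverse in class 0
    left
    simp only [key0]
    apply lex_lt_a
    exact Or.inl hbb

end MainLemmas

end Stmt7Aux

/-- Every finite interval order representable by closed intervals of length 0 or 1
has dimension at most 3. -/
theorem stmt_7 {α : Type*} [Fintype α] [PartialOrder α]
    (h : ∃ l r : α → ℝ, (∀ x, r x - l x = 0 ∨ r x - l x = 1) ∧
      ∀ x y : α, x < y ↔ r x < l y) :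
    DimLE α 3 := by
  classical
  obtain ⟨l, r, hlen, hlt⟩ := h
  have hur : ∀ x, r x = l x ∨ r x = l x + 1 := by
    intro x
    rcases hlen x with h0 | h0
    · left; linarith
    · right; linarith
  let ι : α → ℕ := fun x => ((Fintype.equivFin α) x : ℕ)
  let N := Fintype.card α
  have hιinj : Function.Injective ι := fun a b hab =>
    (Fintype.equivFin α).injective (Fin.ext hab)
  have hιN : ∀ x, ι x < N := fun x => ((Fintype.equivFin α) x).isLt
  have lin : ∀ {β : Type} [LinearOrder β] (K : α → β), Function.Injective K →
      IsLinearOrder α (fun a b => K a ≤ K b) := by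
    intro β _ K hK
    exact { refl := fun a => le_refl _
            trans := fun a b c hab hbc => le_trans hab hbc
            antisymm := fun a b hab hba => hK (le_antisymm hab hba)
            total := fun a b => le_total _ _ }
  have hinj0 : Function.Injective (Stmt7Aux.key0 l r ι N) := by
    intro a b hab
    simp only [Stmt7Aux.key0] at hab
    have h4 := Stmt7Aux.lex_eq_a hab
    have ha := hιN a
    have hb := hιN b
    exact hιinj (by omega)
  have hinj1 : Function.Injective (Stmt7Aux.key1 l r ι) := by
    intro a b hab
    simp only [Stmt7Aux.key1] at hab
    exact hιinj (Stmt7Aux.lex_eq_b hab)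
  have hinj2 : Function.Injective (Stmt7Aux.key2 l r ι) := by
    intro a b hab
    simp only [Stmt7Aux.key2] at hab
    exact hιinj (Stmt7Aux.lex_eq_b hab)
  refine ⟨fun i a b =>
    if i.val = 0 then Stmt7Aux.key0 l r ι N a ≤ Stmt7Aux.key0 l r ι N b
    else if i.val = 1 then Stmt7Aux.key1 l r ι a ≤ Stmt7Aux.key1 l r ι b
    else Stmt7Aux.key2 l r ι a ≤ Stmt7Aux.key2 l r ι b, ?_, ?_⟩
  · intro i
    fin_cases i
    · refine ⟨lin _ hinj0, ?_⟩
      intro a b hab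
      show Stmt7Aux.key0 l r ι N a ≤ Stmt7Aux.key0 l r ι N b
      rcases hab.lt_or_eq with hl' | he'
      · exact (Stmt7Aux.ext0 l r ι N hur ((hlt a b).1 hl')).le
      · rw [he']
    · refine ⟨lin _ hinj1, ?_⟩
      intro a b hab
      show Stmt7Aux.key1 l r ι a ≤ Stmt7Aux.key1 l r ι b
      rcases hab.lt_or_eq with hl' | he'
      · exact (Stmt7Aux.ext1 l r ι hur ((hlt a b).1 hl')).le
      · rw [he']
    · refine ⟨lin _ hinj2, ?_⟩
      intro a b hab
      show Stmt7Aux.key2 l r ι a ≤ Stmt7Aux.key2 l r ι b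
      rcases hab.lt_or_eq with hl' | he'
      · exact (Stmt7Aux.ext2 l r ι hur ((hlt a b).1 hl')).le
      · rw [he']
  · intro x y
    constructor
    · intro hxy i
      fin_cases i
      · show Stmt7Aux.key0 l r ι N x ≤ Stmt7Aux.key0 l r ι N y
        rcases hxy.lt_or_eq with hl' | he'
        · exact (Stmt7Aux.ext0 l r ι N hur ((hlt x y).1 hl')).le
        · rw [he']
      · show Stmt7Aux.key1 l r ι x ≤ Stmt7Aux.key1 l r ι y
        rcases hxy.lt_or_eq with hl' | he'
        · exact (Stmt7Aux.ext1 l r ι hur ((hlt x y).1 hl')).le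
        · rw [he']
      · show Stmt7Aux.key2 l r ι x ≤ Stmt7Aux.key2 l r ι y
        rcases hxy.lt_or_eq with hl' | he'
        · exact (Stmt7Aux.ext2 l r ι hur ((hlt x y).1 hl')).le
        · rw [he']
    · intro hall
      by_contra hn
      have hne : x ≠ y := fun hh => hn (le_of_eq hh)
      by_cases hyx : y < x
      · have h0 : Stmt7Aux.key0 l r ι N x ≤ Stmt7Aux.key0 l r ι N y := hall 0
        have hk := Stmt7Aux.ext0 l r ι N hur ((hlt y x).1 hyx)
        exact absurd (lt_of_le_of_lt h0 hk) (lt_irrefl _)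
      · have hnxy : ¬ x < y := fun hc => hn hc.le
        have h1 : l y ≤ r x := by
          by_contra hc
          push_neg at hc
          exact hnxy ((hlt x y).2 hc)
        have h2 : l x ≤ r y := by
          by_contra hc
          push_neg at hc
          exact hyx ((hlt y x).2 hc)
        rcases Stmt7Aux.rev l r ι N hur hιinj hιN h1 h2 hne with hk | hk | hk
        · have h0 : Stmt7Aux.key0 l r ι N x ≤ Stmt7Aux.key0 l r ι N y := hall 0
          exact absurd (lt_of_le_of_lt h0 hk) (lt_irrefl _)
        · have h0 : Stmt7Aux.key1 l r ι x ≤ Stmt7Aux.key1 l r ι y := hall 1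
          exact absurd (lt_of_le_of_lt h0 hk) (lt_irrefl _)
        · have h0 : Stmt7Aux.key2 l r ι x ≤ Stmt7Aux.key2 l r ι y := hall 2
          exact absurd (lt_of_le_of_lt h0 hk) (lt_irrefl _)
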